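/- For all x, y, z > 0 and t ≥ 0 with x + y + z + t = 1: (1 − t³)² ≥ E(2√(xy))² + E(2√(xz))² + E(2√(yz))². (All three-qubit W-class pure states satisfy the source-entanglement monogamy relation E_s² ≥ E₁₂² + E₁₃² + E₂₃².) -/

import Mathlib

set_option maxHeartbeats 1000000

/-- Binary Shannon entropy (base 2), with the convention `0 * log₂ 0 = 0`
(automatic since `Real.logb 2 0 = 0`). -/
noncomputable def binEntropy (p : ℝ) : ℝ :=
  -p * Real.logb 2 p - (1 - p) * Real.logb 2 (1 - p)

/-- Entanglement-of-formation function of the concurrence `C`. -/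
noncomputable def eof (C : ℝ) : ℝ :=
  binEntropy ((1 + Real.sqrt (1 - C ^ 2)) / 2)

section Aux

/-! ### Schur-type inequalities and polynomial core -/

lemma schur1_sorted (x y z : ℝ) (hz : 0 ≤ z) (h1 : z ≤ y) (h2 : y ≤ x) :
    0 ≤ x*(x-y)*(x-z) + y*(y-x)*(y-z) + z*(z-x)*(z-y) := by
  have key : x*(x-y)*(x-z) + y*(y-x)*(y-z) + z*(z-x)*(z-y)
      = (x-y)^2*(x+y-z) + z*(x-z)*(y-z) := by ring
  rw [key]
  have h3 : z ≤ x := le_trans h1 h2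
  have := mul_nonneg (mul_nonneg hz (sub_nonneg.2 h3)) (sub_nonneg.2 h1)
  nlinarith [sq_nonneg (x-y)]

lemma schur2_sorted (x y z : ℝ) (hx : 0 ≤ x) (hy : 0 ≤ y) (hz : 0 ≤ z)
    (h1 : z ≤ y) (h2 : y ≤ x) :
    0 ≤ x^2*(x-y)*(x-z) + y^2*(y-x)*(y-z) + z^2*(z-x)*(z-y) := by
  have key : x^2*(x-y)*(x-z) + y^2*(y-x)*(y-z) + z^2*(z-x)*(z-y)
      = (x-y)^2*(x*(x-z) + y*(y-z) + x*y) + z^2*(x-z)*(y-z) := by ring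
  rw [key]
  have h3 : z ≤ x := le_trans h1 h2
  have t1 : 0 ≤ x*(x-z) := mul_nonneg hx (sub_nonneg.2 h3)
  have t2 : 0 ≤ y*(y-z) := mul_nonneg hy (sub_nonneg.2 h1)
  have t3 : 0 ≤ x*y := mul_nonneg hx hy
  have t4 : 0 ≤ z^2*((x-z)*(y-z)) :=
    mul_nonneg (sq_nonneg z) (mul_nonneg (sub_nonneg.2 h3) (sub_nonneg.2 h1))
  nlinarith [sq_nonneg (x-y)]

lemma schur1 (x y z : ℝ) (hx : 0 ≤ x) (hy : 0 ≤ y) (hz : 0 ≤ z) :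
    0 ≤ x*(x-y)*(x-z) + y*(y-x)*(y-z) + z*(z-x)*(z-y) := by
  rcases le_total x y with h1 | h1 <;> rcases le_total y z with h2 | h2 <;>
    rcases le_total x z with h3 | h3
  · have := schur1_sorted z y x hx h1 h2; nlinarith [this]
  · have := schur1_sorted z y x hx h1 h2; nlinarith [this]
  · have := schur1_sorted y z x hx h3 h2; nlinarith [this]
  · have := schur1_sorted y x z hz h3 h1; nlinarith [this]
  · have := schur1_sorted z x y hy h1 h3; nlinarith [this]
  · have := schur1_sorted x z y hy h2 h3; nlinarith [this]
  · have := schur1_sorted x y z hz h2 h1; nlinarith [this]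
  · have := schur1_sorted x y z hz h2 h1; nlinarith [this]

lemma schur2 (x y z : ℝ) (hx : 0 ≤ x) (hy : 0 ≤ y) (hz : 0 ≤ z) :
    0 ≤ x^2*(x-y)*(x-z) + y^2*(y-x)*(y-z) + z^2*(z-x)*(z-y) := by
  rcases le_total x y with h1 | h1 <;> rcases le_total y z with h2 | h2 <;>
    rcases le_total x z with h3 | h3
  · have := schur2_sorted z y x hz hy hx h1 h2; nlinarith [this]
  · have := schur2_sorted z y x hz hy hx h1 h2; nlinarith [this]
  · have := schur2_sorted y z x hy hz hx h3 h2; nlinarith [this]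
  · have := schur2_sorted y x z hy hx hz h3 h1; nlinarith [this]
  · have := schur2_sorted z x y hz hx hy h1 h3; nlinarith [this]
  · have := schur2_sorted x z y hx hz hy h2 h3; nlinarith [this]
  · have := schur2_sorted x y z hx hy hz h2 h1; nlinarith [this]
  · have := schur2_sorted x y z hx hy hz h2 h1; nlinarith [this]

lemma lemH (x y z : ℝ) (hx : 0 ≤ x) (hy : 0 ≤ y) (hz : 0 ≤ z) :
    1160*((x*y)^2+(x*z)^2+(y*z)^2)*(x+y+z)^2 ≤
      125*(x^2+y^2+z^2)*(x+y+z)^4 + 640*((x*y)^3+(x*z)^3+(y*z)^3) := by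
  have hs1 := schur1 x y z hx hy hz
  have hs2 := schur2 x y z hx hy hz
  have hσ3 : (0:ℝ) ≤ (x+y+z)^3 := by positivity
  have hσ2 : (0:ℝ) ≤ (x+y+z)^2 := by positivity
  have hB4 : 0 ≤ x*y*z*(x+y+z)*((x-y)^2+(y-z)^2+(x-z)^2) := by positivity
  have hG2 : 0 ≤ x^3*y*(x-y)^2 + y^3*x*(x-y)^2 + x^3*z*(x-z)^2 + z^3*x*(x-z)^2
      + y^3*z*(y-z)^2 + z^3*y*(y-z)^2 := by positivity
  have hG5 : 0 ≤ x*y*(x^2-y^2)^2 + x*z*(x^2-z^2)^2 + y*z*(y^2-z^2)^2 := by positivity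
  have hG9 : 0 ≤ x*y*z*(x*((x-y)^2+(x-z)^2) + y*((y-x)^2+(y-z)^2) + z*((z-x)^2+(z-y)^2)) := by
    positivity
  have hP3 : 0 ≤ x*y*z*(x^3+y^3+z^3) := by positivity
  have hS1 := mul_nonneg hσ3 hs1
  have hS2 := mul_nonneg hσ2 hs2
  have key : 125*(x^2+y^2+z^2)*(x+y+z)^4 + 640*((x*y)^3+(x*z)^3+(y*z)^3)
      - 1160*((x*y)^2+(x*z)^2+(y*z)^2)*(x+y+z)^2
      = 230*(x*y*z*(x+y+z)*((x-y)^2+(y-z)^2+(x-z)^2))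
      + 100*((x+y+z)^3*(x*(x-y)*(x-z) + y*(y-x)*(y-z) + z*(z-x)*(z-y)))
      + 25*((x+y+z)^2*(x^2*(x-y)*(x-z) + y^2*(y-x)*(y-z) + z^2*(z-x)*(z-y)))
      + 80*(x^3*y*(x-y)^2 + y^3*x*(x-y)^2 + x^3*z*(x-z)^2 + z^3*x*(x-z)^2
            + y^3*z*(y-z)^2 + z^3*y*(y-z)^2)
      + 195*(x*y*(x^2-y^2)^2 + x*z*(x^2-z^2)^2 + y*z*(y^2-z^2)^2)
      + 220*(x*y*z*(x*((x-y)^2+(x-z)^2) + y*((y-x)^2+(y-z)^2) + z*((z-x)^2+(z-y)^2)))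
      + 325*(x*y*z*(x^3+y^3+z^3)) := by ring
  linarith [key.ge, key.le]

lemma lemD (x y z : ℝ) (hx : 0 ≤ x) (hy : 0 ≤ y) (hz : 0 ≤ z) (hs : x + y + z ≤ 1) :
    1160*((x*y)^2+(x*z)^2+(y*z)^2) ≤ 125*(x^2+y^2+z^2) + 640*((x*y)^3+(x*z)^3+(y*z)^3) := by
  have hH := lemH x y z hx hy hz
  have hD2 : 1160*((x*y)^2+(x*z)^2+(y*z)^2) ≤ 125*(x^2+y^2+z^2)*(1+(x+y+z)^2) := by
    nlinarith [sq_nonneg (x-y), sq_nonneg (y-z), sq_nonneg (x-z),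
      mul_nonneg hx hy, mul_nonneg hx hz, mul_nonneg hy hz,
      mul_nonneg (mul_nonneg hx hy) hz, sq_nonneg (x*y+x*z+y*z), sq_nonneg (x+y+z),
      mul_nonneg (sub_nonneg.2 hs) (mul_nonneg hx hy),
      mul_nonneg (sub_nonneg.2 hs) (mul_nonneg hx hz),
      mul_nonneg (sub_nonneg.2 hs) (mul_nonneg hy hz),
      sq_nonneg (x*y-x*z), sq_nonneg (x*y-y*z), sq_nonneg (x*z-y*z)]
  have h1s : 0 ≤ 1 - (x+y+z)^2 := by nlinarith [add_nonneg (add_nonneg hx hy) hz]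
  nlinarith [mul_nonneg h1s (sub_nonneg.2 hD2)]

/-! ### The series lower bound for `(1+r) log (1+r) + (1-r) log (1-r)` -/

lemma keyA1 (r : ℝ) (h0 : 0 ≤ r) (h1 : r < 1) :
    2*r + 2*r^3/3 + 2*r^5/5 + 2*r^7/7 ≤ Real.log (1+r) - Real.log (1-r) := by
  set f : ℝ → ℝ := fun t => Real.log (1+t) - Real.log (1-t) - (2*t + 2*t^3/3 + 2*t^5/5 + 2*t^7/7)
    with hf
  have hd : ∀ t : ℝ, 0 ≤ t → t < 1 → HasDerivAt f (2*t^8/(1-t^2)) t := by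
    intro t ht0 ht1
    have h1t : (0:ℝ) < 1 + t := by linarith
    have h2t : (0:ℝ) < 1 - t := by linarith
    have d1 : HasDerivAt (fun u : ℝ => Real.log (1+u)) (1/(1+t)) t := by
      have h : HasDerivAt (fun u : ℝ => 1+u) 1 t := (hasDerivAt_id t).const_add 1
      simpa using h.log (ne_of_gt h1t)
    have d2 : HasDerivAt (fun u : ℝ => Real.log (1-u)) (-(1/(1-t))) t := by
      have h : HasDerivAt (fun u : ℝ => 1-u) (-1) t := (hasDerivAt_id t).const_sub 1
      have := h.log (ne_of_gt h2t)
      refine this.congr_deriv ?_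
      field_simp
    have d3 : HasDerivAt (fun u : ℝ => 2*u + 2*u^3/3 + 2*u^5/5 + 2*u^7/7)
        (2 + 2*t^2 + 2*t^4 + 2*t^6) t := by
      have p1 := hasDerivAt_pow 3 t
      have p2 := hasDerivAt_pow 5 t
      have p3 := hasDerivAt_pow 7 t
      have := ((((hasDerivAt_id t).const_mul 2).add (p1.const_mul (2/3:ℝ))).add
        (p2.const_mul (2/5:ℝ))).add (p3.const_mul (2/7:ℝ))
      convert this using 1
      · rfl
      · rfl
      · ext u; simp only [id_eq, Pi.add_apply]; ring
      · push_cast; ring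
    have := (d1.sub d2).sub d3
    refine this.congr_deriv ?_
    have hne : (1 - t^2) ≠ 0 := by nlinarith
    field_simp
    ring
  have mono : MonotoneOn f (Set.Icc 0 r) := by
    apply monotoneOn_of_deriv_nonneg (convex_Icc 0 r)
    · intro t ht
      exact (hd t ht.1 (lt_of_le_of_lt ht.2 h1)).continuousAt.continuousWithinAt
    · intro t ht
      rw [interior_Icc] at ht
      exact (hd t ht.1.le (lt_trans ht.2 h1)).differentiableAt.differentiableWithinAt
    · intro t ht
      rw [interior_Icc] at ht
      rw [(hd t ht.1.le (lt_trans ht.2 h1)).deriv]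
      have : (0:ℝ) < 1 - t^2 := by nlinarith [ht.1, ht.2, h1]
      positivity
  have h00 : f 0 ≤ f r := mono (Set.left_mem_Icc.2 h0) (Set.right_mem_Icc.2 h0) h0
  simp only [hf] at h00
  norm_num at h00
  linarith

lemma keyA (r : ℝ) (h0 : 0 ≤ r) (h1 : r < 1) :
    r^2 + r^4/6 + r^6/15 + r^8/28 ≤ (1+r)*Real.log (1+r) + (1-r)*Real.log (1-r) := by
  set f : ℝ → ℝ := fun t =>
      (1+t)*Real.log (1+t) + (1-t)*Real.log (1-t) - (t^2 + t^4/6 + t^6/15 + t^8/28) with hf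
  have hd : ∀ t : ℝ, 0 ≤ t → t < 1 → HasDerivAt f
      (Real.log (1+t) - Real.log (1-t) - (2*t + 2*t^3/3 + 2*t^5/5 + 2*t^7/7)) t := by
    intro t ht0 ht1
    have h1t : (0:ℝ) < 1 + t := by linarith
    have h2t : (0:ℝ) < 1 - t := by linarith
    have e1 : HasDerivAt (fun u : ℝ => 1+u) 1 t := (hasDerivAt_id t).const_add 1
    have e2 : HasDerivAt (fun u : ℝ => 1-u) (-1) t := (hasDerivAt_id t).const_sub 1
    have d1 : HasDerivAt (fun u : ℝ => (1+u)*Real.log (1+u)) (Real.log (1+t) + 1) t := by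
      have hl : HasDerivAt (fun u : ℝ => Real.log (1+u)) (1/(1+t)) t := by
        simpa using e1.log (ne_of_gt h1t)
      have := e1.mul hl
      refine this.congr_deriv ?_
      field_simp
    have d2 : HasDerivAt (fun u : ℝ => (1-u)*Real.log (1-u)) (-Real.log (1-t) - 1) t := by
      have hl : HasDerivAt (fun u : ℝ => Real.log (1-u)) (-(1/(1-t))) t := by
        have := e2.log (ne_of_gt h2t)
        refine this.congr_deriv ?_
        field_simp
      have := e2.mul hl
      refine this.congr_deriv ?_
      field_simp
      ring
    have d3 : HasDerivAt (fun u : ℝ => u^2 + u^4/6 + u^6/15 + u^8/28)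
        (2*t + 2*t^3/3 + 2*t^5/5 + 2*t^7/7) t := by
      have p1 := hasDerivAt_pow 2 t
      have p2 := hasDerivAt_pow 4 t
      have p3 := hasDerivAt_pow 6 t
      have p4 := hasDerivAt_pow 8 t
      have := ((p1.add (p2.const_mul (1/6:ℝ))).add (p3.const_mul (1/15:ℝ))).add
        (p4.const_mul (1/28:ℝ))
      convert this using 1
      · rfl
      · rfl
      · ext u; simp only [Pi.add_apply]; ring
      · push_cast; ring
    have := (d1.add d2).sub d3
    refine this.congr_deriv ?_
    ring
  have mono : MonotoneOn f (Set.Icc 0 r) := by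
    apply monotoneOn_of_deriv_nonneg (convex_Icc 0 r)
    · intro t ht
      exact (hd t ht.1 (lt_of_le_of_lt ht.2 h1)).continuousAt.continuousWithinAt
    · intro t ht
      rw [interior_Icc] at ht
      exact (hd t ht.1.le (lt_trans ht.2 h1)).differentiableAt.differentiableWithinAt
    · intro t ht
      rw [interior_Icc] at ht
      rw [(hd t ht.1.le (lt_trans ht.2 h1)).deriv]
      have := keyA1 t ht.1.le (lt_trans ht.2 h1)
      linarith
  have h00 : f 0 ≤ f r := mono (Set.left_mem_Icc.2 h0) (Set.right_mem_Icc.2 h0) h0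
  simp only [hf] at h00
  norm_num at h00
  linarith

/-! ### Properties of `eof` -/

lemma binEntropy_nonneg' (p : ℝ) (h0 : 0 ≤ p) (h1 : p ≤ 1) : 0 ≤ binEntropy p := by
  unfold binEntropy
  have t1 : Real.logb 2 p ≤ 0 := Real.logb_nonpos (by norm_num) h0 h1
  have t2 : Real.logb 2 (1-p) ≤ 0 := Real.logb_nonpos (by norm_num) (by linarith) (by linarith)
  nlinarith [mul_nonneg h0 (neg_nonneg.2 t1), mul_nonneg (by linarith : (0:ℝ) ≤ 1-p)
    (neg_nonneg.2 t2)]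

lemma eof_nonneg (C : ℝ) (h0 : 0 ≤ C) (h1 : C ≤ 1) : 0 ≤ eof C := by
  unfold eof
  have hr0 : 0 ≤ Real.sqrt (1-C^2) := Real.sqrt_nonneg _
  have hr1 : Real.sqrt (1-C^2) ≤ 1 := by
    have h := Real.sqrt_le_sqrt (show 1-C^2 ≤ 1 by nlinarith)
    simpa using h
  apply binEntropy_nonneg' _ (by linarith) (by linarith)

lemma eof_le_eta (C : ℝ) (h0 : 0 < C) (h1 : C ≤ 1) :
    eof C ≤ 1 - ((1-C^2) + (1-C^2)^2/6 + (1-C^2)^3/15 + (1-C^2)^4/28)/(2*Real.log 2) := by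
  set r := Real.sqrt (1-C^2) with hrdef
  have hr0 : 0 ≤ r := Real.sqrt_nonneg _
  have hC2 : 0 ≤ 1 - C^2 := by nlinarith
  have hr2 : r^2 = 1-C^2 := Real.sq_sqrt hC2
  have hr1 : r < 1 := by nlinarith
  have h1r : (0:ℝ) < 1+r := by linarith
  have h2r : (0:ℝ) < 1-r := by linarith
  have hL : (0:ℝ) < Real.log 2 := Real.log_pos (by norm_num)
  have hA := keyA r hr0 hr1
  have heq : eof C = 1 - ((1+r)*Real.log (1+r) + (1-r)*Real.log (1-r))/(2*Real.log 2) := by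
    unfold eof binEntropy
    rw [← hrdef]
    rw [show (1:ℝ) - (1+r)/2 = (1-r)/2 by ring]
    rw [Real.logb, Real.logb]
    rw [Real.log_div (by linarith) (by norm_num), Real.log_div (by linarith) (by norm_num)]
    field_simp
    ring
  rw [heq]
  have hSD : (1-C^2) + (1-C^2)^2/6 + (1-C^2)^3/15 + (1-C^2)^4/28
      ≤ (1+r)*Real.log (1+r) + (1-r)*Real.log (1-r) := by
    calc (1-C^2) + (1-C^2)^2/6 + (1-C^2)^3/15 + (1-C^2)^4/28
        = r^2 + r^4/6 + r^6/15 + r^8/28 := by rw [← hr2]; ring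
      _ ≤ _ := hA
  have h2L : (0:ℝ) < 2*Real.log 2 := by linarith
  have hdiv := (div_le_div_iff_of_pos_right h2L).mpr hSD
  linarith

lemma eof_sq_small (C : ℝ) (h0 : 0 < C) (h1 : C^2 ≤ 1/20) :
    eof C ^ 2 ≤ C^2/2 := by
  set r := Real.sqrt (1-C^2) with hrdef
  have hr0 : 0 ≤ r := Real.sqrt_nonneg _
  have hC2 : 0 ≤ 1 - C^2 := by nlinarith
  have hr2 : r^2 = 1-C^2 := Real.sq_sqrt hC2
  have hr1 : r < 1 := by nlinarith
  have hrlow : (0.9746:ℝ) ≤ r := by nlinarith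
  set q := (1-r)/2 with hqdef
  have hq0 : 0 < q := by simp only [hqdef]; linarith
  have hq1 : q ≤ 0.0127 := by simp only [hqdef]; linarith
  have hC2q : C^2 = 4*q*(1-q) := by simp only [hqdef]; nlinarith [hr2]
  have hL : (0:ℝ) < Real.log 2 := Real.log_pos (by norm_num)
  have hLlow : (0.6931471803:ℝ) < Real.log 2 := Real.log_two_gt_d9
  -- eof C in terms of q
  have heq : eof C = ((1-q)*Real.log (1-q)⁻¹ + q*Real.log q⁻¹)/Real.log 2 := by
    unfold eof binEntropy
    rw [← hrdef]
    rw [show (1+r)/2 = 1 - q by simp only [hqdef]; ring]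
    rw [show (1:ℝ) - (1-q) = q by ring]
    rw [Real.logb, Real.logb, Real.log_inv, Real.log_inv]
    field_simp
    ring
  -- the eighth root
  set v := Real.sqrt (Real.sqrt (Real.sqrt q)) with hvdef
  have hv0 : 0 < v := by
    simp only [hvdef]
    apply Real.sqrt_pos.2
    apply Real.sqrt_pos.2
    exact Real.sqrt_pos.2 hq0
  have hv8 : v^8 = q := by
    simp only [hvdef]
    rw [show (8:ℕ) = 2*(2*2) by norm_num]
    rw [pow_mul, Real.sq_sqrt (Real.sqrt_nonneg _), pow_mul,
      Real.sq_sqrt (Real.sqrt_nonneg _), sq, Real.mul_self_sqrt hq0.le]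
  have hv058 : v ≤ 0.58 := by
    have h8 : v^8 ≤ (0.58:ℝ)^8 := by rw [hv8]; norm_num; linarith
    exact le_of_pow_le_pow_left₀ (by norm_num) (by norm_num) h8
  -- bound the two entropy terms
  have hb1 : (1-q)*Real.log (1-q)⁻¹ ≤ q := by
    have h1q : (0:ℝ) < 1-q := by linarith
    have hpos : (0:ℝ) < (1-q)⁻¹ := inv_pos.2 h1q
    have := Real.log_le_sub_one_of_pos hpos
    calc (1-q)*Real.log (1-q)⁻¹ ≤ (1-q)*((1-q)⁻¹ - 1) := by
          apply mul_le_mul_of_nonneg_left this h1q.le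
      _ = q := by field_simp; ring
  have hb2 : q*Real.log q⁻¹ ≤ 8*v^7 - 8*v^8 := by
    have hlog : Real.log q⁻¹ = 8 * Real.log v⁻¹ := by
      rw [← hv8, ← inv_pow, Real.log_pow]
      norm_num
    have hvinv : Real.log v⁻¹ ≤ v⁻¹ - 1 := Real.log_le_sub_one_of_pos (by positivity)
    calc q*Real.log q⁻¹ = v^8 * (8 * Real.log v⁻¹) := by rw [hlog, ← hv8]
      _ ≤ v^8 * (8 * (v⁻¹ - 1)) := by
          apply mul_le_mul_of_nonneg_left _ (by positivity)
          linarith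
      _ = 8*v^7 - 8*v^8 := by field_simp
  have heof_le : eof C ≤ (8*v^7 - 7*v^8)/Real.log 2 := by
    rw [heq]
    apply (div_le_div_iff_of_pos_right hL).mpr
    linarith [hb1, hb2]
  have heof0 : 0 ≤ eof C := by
    apply eof_nonneg C h0.le
    nlinarith
  have hLup : Real.log 2 < 0.6931471808 := Real.log_two_lt_d9
  have hsq : eof C ^ 2 ≤ ((8*v^7 - 7*v^8)/Real.log 2)^2 := by
    apply pow_le_pow_left₀ heof0 heof_le
  have hL2 : (0:ℝ) < (Real.log 2)^2 := by positivity
  have hC2v : C^2/2 = 2*(v^8)*(1-v^8) := by rw [hC2q, ← hv8]; ring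
  have hcase : v^6*(8-7*v)^2 ≤ 0.9 := by
    rcases le_total v 0.45 with hv | hv
    · have h6 : v^6 ≤ (0.45:ℝ)^6 := pow_le_pow_left₀ hv0.le hv 6
      have hsq8 : (8-7*v)^2 ≤ 64 := by nlinarith [hv0.le, hv058]
      have := mul_le_mul h6 hsq8 (sq_nonneg (8-7*v)) (by norm_num : (0:ℝ) ≤ (0.45:ℝ)^6)
      nlinarith [this]
    · have h6 : v^6 ≤ (0.58:ℝ)^6 := pow_le_pow_left₀ hv0.le hv058 6
      have hsq8 : (8-7*v)^2 ≤ (4.85:ℝ)^2 := by nlinarith [hv, hv058]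
      have := mul_le_mul h6 hsq8 (sq_nonneg (8-7*v)) (by norm_num : (0:ℝ) ≤ (0.58:ℝ)^6)
      nlinarith [this]
  have hv8b : v^8 ≤ 0.0128063 := by
    have := pow_le_pow_left₀ hv0.le hv058 8
    nlinarith [this]
  have hLsq : (0.6931471803:ℝ)^2 ≤ (Real.log 2)^2 := by nlinarith [hLlow]
  have hLsqup : (Real.log 2)^2 ≤ (0.4804531:ℝ) := by nlinarith [hLup, hL]
  have hprod : (Real.log 2)^2 * v^8 ≤ 0.4804531*0.0128063 :=
    mul_le_mul hLsqup hv8b (pow_nonneg hv0.le 8) (by norm_num)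
  have hrhs : (0.94:ℝ) ≤ 2*(Real.log 2)^2*(1-v^8) := by nlinarith [hLsq, hprod]
  have hmain : (8*v^7 - 7*v^8)^2 ≤ (C^2/2)*(Real.log 2)^2 := by
    have e : (8*v^7 - 7*v^8)^2 = v^8 * (v^6*(8-7*v)^2) := by ring
    rw [e, hC2v]
    have h1 : v^8 * (v^6*(8-7*v)^2) ≤ v^8 * (2*(Real.log 2)^2*(1-v^8)) := by
      apply mul_le_mul_of_nonneg_left _ (pow_nonneg hv0.le 8)
      linarith [hcase, hrhs]
    calc v^8 * (v^6*(8-7*v)^2) ≤ v^8 * (2*(Real.log 2)^2*(1-v^8)) := h1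
      _ = 2*v^8*(1-v^8)*(Real.log 2)^2 := by ring
  calc eof C ^ 2 ≤ ((8*v^7 - 7*v^8)/Real.log 2)^2 := hsq
    _ = (8*v^7 - 7*v^8)^2/(Real.log 2)^2 := by rw [div_pow]
    _ ≤ C^2/2 := by rw [div_le_iff₀ hL2]; exact hmain

lemma lemC (u : ℝ) (h1 : 1/20 ≤ u) (h2 : u ≤ 1) :
    (1 - ((1-u) + (1-u)^2/6 + (1-u)^3/15 + (1-u)^4/28)/(2*Real.log 2))^2
      ≤ u/2 + (29*u^2 - 4*u^3)/50 := by
  set S := (1-u) + (1-u)^2/6 + (1-u)^3/15 + (1-u)^4/28 with hSdef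
  have hw0 : 0 ≤ 1-u := by linarith
  have hw1 : 1-u ≤ 19/20 := by linarith
  have hS0 : 0 ≤ S := by positivity
  have hS1 : S ≤ 533/420 := by
    simp only [hSdef]
    nlinarith [mul_nonneg hw0 (sub_nonneg.2 hw1),
      mul_nonneg (mul_nonneg hw0 hw0) (sub_nonneg.2 hw1),
      mul_nonneg (mul_nonneg (mul_nonneg hw0 hw0) hw0) (sub_nonneg.2 hw1),
      mul_nonneg hw0 hw0, mul_nonneg (mul_nonneg hw0 hw0) hw0]
  have hL : (0:ℝ) < Real.log 2 := Real.log_pos (by norm_num)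
  have hLlow : (0.6931471803:ℝ) < Real.log 2 := Real.log_two_gt_d9
  have hLhigh : Real.log 2 < 0.6931471808 := Real.log_two_lt_d9
  have expand : (1 - S/(2*Real.log 2))^2 = 1 - S/Real.log 2 + (S/(2*Real.log 2))^2 := by
    field_simp
    ring
  rw [expand]
  have e1 : (1.442695:ℝ)*S ≤ S/Real.log 2 := by
    rw [le_div_iff₀ hL]
    nlinarith [mul_le_mul_of_nonneg_left hLhigh.le hS0]
  have e2 : (S/(2*Real.log 2))^2 ≤ (0.5203423:ℝ)*S^2 := by
    have h2L2 : (1.9218120542:ℝ) ≤ (2*Real.log 2)^2 := by nlinarith [hLlow]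
    rw [div_pow, div_le_iff₀ (by positivity)]
    nlinarith [mul_le_mul_of_nonneg_left h2L2 (sq_nonneg S)]
  have hpoly : 1 - 1.442695*S + 0.5203423*S^2 ≤ u/2 + (29*u^2 - 4*u^3)/50 := by
    simp only [hSdef]
    nlinarith [mul_nonneg hw0 (sub_nonneg.2 hw1),
      mul_nonneg (mul_nonneg hw0 hw0) (sub_nonneg.2 hw1),
      mul_nonneg (mul_nonneg (mul_nonneg hw0 hw0) hw0) (sub_nonneg.2 hw1),
      mul_nonneg (mul_nonneg (mul_nonneg (mul_nonneg hw0 hw0) hw0) hw0) (sub_nonneg.2 hw1),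
      mul_nonneg (mul_nonneg (mul_nonneg (mul_nonneg (mul_nonneg hw0 hw0) hw0) hw0) hw0)
        (sub_nonneg.2 hw1),
      mul_nonneg (mul_nonneg (mul_nonneg (mul_nonneg (mul_nonneg (mul_nonneg hw0 hw0) hw0)
        hw0) hw0) hw0) (sub_nonneg.2 hw1),
      mul_nonneg (mul_nonneg (mul_nonneg (mul_nonneg (mul_nonneg (mul_nonneg (mul_nonneg
        hw0 hw0) hw0) hw0) hw0) hw0) hw0) (sub_nonneg.2 hw1),
      mul_nonneg hw0 hw0, mul_nonneg (mul_nonneg hw0 hw0) hw0,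
      sq_nonneg ((1-u)^2), sq_nonneg ((1-u)^3), sq_nonneg ((1-u)*(1-u-1))]
  have hs2 : 0.5203423*S^2 ≤ 0.5203423*S^2 := le_refl _
  nlinarith [e1, e2, hpoly, sq_nonneg S]

end Aux

/-- All three-qubit W-class pure states satisfy the source-entanglement
monogamy relation `E_s² ≥ E₁₂² + E₁₃² + E₂₃²`. -/
theorem source_monogamy_W_class (x y z t : ℝ) (hx : 0 < x) (hy : 0 < y) (hz : 0 < z)
    (ht : 0 ≤ t) (hsum : x + y + z + t = 1) :
    (1 - t ^ 3) ^ 2 ≥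
      (eof (2 * Real.sqrt (x * y))) ^ 2 + (eof (2 * Real.sqrt (x * z))) ^ 2 +
        (eof (2 * Real.sqrt (y * z))) ^ 2 := by
  have hs1 : x + y + z ≤ 1 := by linarith
  -- generic per-pair bound
  have pair : ∀ a b : ℝ, 0 < a → 0 < b → a + b ≤ 1 →
      (eof (2 * Real.sqrt (a*b)))^2 ≤
        2*(a*b) + (29*16*(a*b)^2 - 4*64*(a*b)^3)/50 := by
    intro a b ha hb hab
    set C := 2 * Real.sqrt (a*b) with hCdef
    have hab0 : 0 < a*b := mul_pos ha hb
    have hC0 : 0 < C := by positivity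
    have hC2 : C^2 = 4*(a*b) := by
      simp only [hCdef]
      rw [mul_pow, Real.sq_sqrt hab0.le]
      ring
    have hC1 : C ≤ 1 := by nlinarith [sq_nonneg (a-b)]
    have main : (eof C)^2 ≤ C^2/2 + (29*(C^2)^2 - 4*(C^2)^3)/50 := by
      rcases le_total (C^2) (1/20) with hsm | hbig
      · have := eof_sq_small C hC0 hsm
        have hpos : 0 ≤ 29*(C^2)^2 - 4*(C^2)^3 := by nlinarith [sq_nonneg C]
        linarith
      · have hB := eof_le_eta C hC0 hC1
        have hC2le : C^2 ≤ 1 := by nlinarith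
        have hCineq := lemC (C^2) hbig hC2le
        have heof0 := eof_nonneg C hC0.le hC1
        have hB0 : 0 ≤ 1 - ((1-C^2) + (1-C^2)^2/6 + (1-C^2)^3/15 + (1-C^2)^4/28)
            /(2*Real.log 2) := le_trans heof0 hB
        calc (eof C)^2 ≤ (1 - ((1-C^2) + (1-C^2)^2/6 + (1-C^2)^3/15 + (1-C^2)^4/28)
            /(2*Real.log 2))^2 := by apply pow_le_pow_left₀ heof0 hB
          _ ≤ C^2/2 + (29*(C^2)^2 - 4*(C^2)^3)/50 := hCineq
    calc (eof C)^2 ≤ C^2/2 + (29*(C^2)^2 - 4*(C^2)^3)/50 := main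
      _ = 2*(a*b) + (29*16*(a*b)^2 - 4*64*(a*b)^3)/50 := by rw [hC2]; ring
  have p1 := pair x y hx hy (by linarith)
  have p2 := pair x z hx hz (by linarith)
  have p3 := pair y z hy hz (by linarith)
  have hD := lemD x y z hx.le hy.le hz.le hs1
  -- sum of phi's ≤ (x+y+z)^2
  have hsum2 : 2*(x*y) + (29*16*(x*y)^2 - 4*64*(x*y)^3)/50
      + (2*(x*z) + (29*16*(x*z)^2 - 4*64*(x*z)^3)/50)
      + (2*(y*z) + (29*16*(y*z)^2 - 4*64*(y*z)^3)/50) ≤ (x+y+z)^2 := by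
    nlinarith [hD]
  -- (1-t^3)^2 ≥ (x+y+z)^2
  have ht1 : t ≤ 1 := by linarith
  have hts : x+y+z = 1-t := by linarith
  have hfin : (x+y+z)^2 ≤ (1-t^3)^2 := by
    rw [hts]
    have h1 : 0 ≤ 1-t := by linarith
    have h2 : 1-t ≤ 1-t^3 := by
      nlinarith [mul_nonneg (mul_nonneg ht (sub_nonneg.2 ht1)) (by linarith : (0:ℝ) ≤ 1+t)]
    nlinarith
  linarith [p1, p2, p3, hsum2, hfin]
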